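/- Let z_1, ..., z_m be nonzero real numbers, let λ, λ', μ, μ' be reals, and let {1,...,m} be partitioned into four (possibly empty) sets T1, T2, T3, T4. Define a_i = z_i·(λ, μ, 1) for i ∈ T1, a_i = z_i·(λ, μ', 1) for i ∈ T2, a_i = z_i·(λ', μ, 1) for i ∈ T3, and a_i = z_i·(λ', μ', 1) for i ∈ T4. Then ∑_{1 ≤ i < j < k ≤ m} |det(a_i, a_j, a_k)| = |λ - λ'| · |μ - μ'| · (s2·s3·s4 + s1·s3·s4 + s1·s2·s4 + s1·s2·s3), where s_r = ∑_{i ∈ T_r} |z_i| for r = 1, 2, 3, 4. -/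

import Mathlib

set_option maxHeartbeats 4000000 in
private lemma sym6_aux {m : ℕ} (F : Fin m → Fin m → Fin m → ℝ)
    (hs2 : ∀ i j k, F j i k = F i j k)
    (hs1 : ∀ i j k, F i k j = F i j k)
    (hdiag : ∀ i j k, (i = j ∨ j = k ∨ i = k) → F i j k = 0) :
    (∑ i : Fin m, ∑ j : Fin m, ∑ k : Fin m, F i j k)
      = 6 * ∑ i : Fin m, ∑ j : Fin m, ∑ k : Fin m,
          (if i < j ∧ j < k then F i j k else 0) := by
  have hs3 : ∀ i j k, F k i j = F i j k := fun i j k => (hs2 i k j).trans (hs1 i j k)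
  have hs4 : ∀ i j k, F j k i = F i j k := fun i j k => (hs1 j i k).trans (hs2 i j k)
  have hs5 : ∀ i j k, F k j i = F i j k := fun i j k => (hs2 j k i).trans (hs4 i j k)
  have e12 : ∀ h : Fin m → Fin m → Fin m → ℝ,
      (∑ i : Fin m, ∑ j : Fin m, ∑ k : Fin m, h i j k)
        = ∑ i : Fin m, ∑ j : Fin m, ∑ k : Fin m, h j i k := fun h => Finset.sum_comm
  have e23 : ∀ h : Fin m → Fin m → Fin m → ℝ,
      (∑ i : Fin m, ∑ j : Fin m, ∑ k : Fin m, h i j k)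
        = ∑ i : Fin m, ∑ j : Fin m, ∑ k : Fin m, h i k j :=
    fun h => Finset.sum_congr rfl fun i _ => Finset.sum_comm
  have e312 : ∀ h : Fin m → Fin m → Fin m → ℝ,
      (∑ i : Fin m, ∑ j : Fin m, ∑ k : Fin m, h i j k)
        = ∑ i : Fin m, ∑ j : Fin m, ∑ k : Fin m, h k i j :=
    fun h => (e12 h).trans (e23 fun a b c => h b a c)
  have e231 : ∀ h : Fin m → Fin m → Fin m → ℝ,
      (∑ i : Fin m, ∑ j : Fin m, ∑ k : Fin m, h i j k)
        = ∑ i : Fin m, ∑ j : Fin m, ∑ k : Fin m, h j k i :=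
    fun h => (e23 h).trans (e12 fun a b c => h a c b)
  have e321 : ∀ h : Fin m → Fin m → Fin m → ℝ,
      (∑ i : Fin m, ∑ j : Fin m, ∑ k : Fin m, h i j k)
        = ∑ i : Fin m, ∑ j : Fin m, ∑ k : Fin m, h k j i :=
    fun h => (e312 h).trans (e12 fun a b c => h c a b)
  have key : ∀ i j k : Fin m, F i j k =
      (if i < j ∧ j < k then F i j k else 0) + (if i < k ∧ k < j then F i j k else 0)
      + (if j < i ∧ i < k then F i j k else 0) + (if j < k ∧ k < i then F i j k else 0)
      + (if k < i ∧ i < j then F i j k else 0) + (if k < j ∧ j < i then F i j k else 0) := by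
    intro i j k
    split_ifs <;>
      first
        | omega
        | (simp only [add_zero, zero_add] <;> exact hdiag i j k (by omega))
  calc (∑ i : Fin m, ∑ j : Fin m, ∑ k : Fin m, F i j k)
      = ∑ i : Fin m, ∑ j : Fin m, ∑ k : Fin m,
          ((if i < j ∧ j < k then F i j k else 0) + (if i < k ∧ k < j then F i j k else 0)
          + (if j < i ∧ i < k then F i j k else 0) + (if j < k ∧ k < i then F i j k else 0)
          + (if k < i ∧ i < j then F i j k else 0) + (if k < j ∧ j < i then F i j k else 0)) := by
        exact Finset.sum_congr rfl fun i _ => Finset.sum_congr rfl fun j _ =>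
          Finset.sum_congr rfl fun k _ => key i j k
    _ = (∑ i : Fin m, ∑ j : Fin m, ∑ k : Fin m, (if i < j ∧ j < k then F i j k else 0))
        + (∑ i : Fin m, ∑ j : Fin m, ∑ k : Fin m, (if i < k ∧ k < j then F i j k else 0))
        + (∑ i : Fin m, ∑ j : Fin m, ∑ k : Fin m, (if j < i ∧ i < k then F i j k else 0))
        + (∑ i : Fin m, ∑ j : Fin m, ∑ k : Fin m, (if j < k ∧ k < i then F i j k else 0))
        + (∑ i : Fin m, ∑ j : Fin m, ∑ k : Fin m, (if k < i ∧ i < j then F i j k else 0))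
        + (∑ i : Fin m, ∑ j : Fin m, ∑ k : Fin m, (if k < j ∧ j < i then F i j k else 0)) := by
        simp only [Finset.sum_add_distrib]
    _ = 6 * ∑ i : Fin m, ∑ j : Fin m, ∑ k : Fin m, (if i < j ∧ j < k then F i j k else 0) := by
        rw [e23 (fun i j k => if i < k ∧ k < j then F i j k else 0)]
        rw [e12 (fun i j k => if j < i ∧ i < k then F i j k else 0)]
        rw [e312 (fun i j k => if j < k ∧ k < i then F i j k else 0)]
        rw [e231 (fun i j k => if k < i ∧ i < j then F i j k else 0)]
        rw [e321 (fun i j k => if k < j ∧ j < i then F i j k else 0)]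
        simp only [hs1, hs2, hs3, hs4, hs5]
        ring

set_option maxHeartbeats 4000000

theorem stmt_6 (m : ℕ) (z : Fin m → ℝ) (hz : ∀ i, z i ≠ 0) (lam lam' mu mu' : ℝ)
    (T1 T2 T3 T4 : Finset (Fin m))
    (h12 : Disjoint T1 T2) (h13 : Disjoint T1 T3) (h14 : Disjoint T1 T4)
    (h23 : Disjoint T2 T3) (h24 : Disjoint T2 T4) (h34 : Disjoint T3 T4)
    (hcover : T1 ∪ T2 ∪ T3 ∪ T4 = Finset.univ)
    (a : Fin m → Fin 3 → ℝ)
    (ha1 : ∀ i ∈ T1, a i = z i • ![lam, mu, 1])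
    (ha2 : ∀ i ∈ T2, a i = z i • ![lam, mu', 1])
    (ha3 : ∀ i ∈ T3, a i = z i • ![lam', mu, 1])
    (ha4 : ∀ i ∈ T4, a i = z i • ![lam', mu', 1]) :
    (∑ i : Fin m, ∑ j : Fin m, ∑ k : Fin m,
        if i < j ∧ j < k then
          |Matrix.det !![a i 0, a j 0, a k 0; a i 1, a j 1, a k 1; a i 2, a j 2, a k 2]|
        else 0)
      = |lam - lam'| * |mu - mu'| *
        ((∑ i ∈ T2, |z i|) * (∑ i ∈ T3, |z i|) * (∑ i ∈ T4, |z i|)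
          + (∑ i ∈ T1, |z i|) * (∑ i ∈ T3, |z i|) * (∑ i ∈ T4, |z i|)
          + (∑ i ∈ T1, |z i|) * (∑ i ∈ T2, |z i|) * (∑ i ∈ T4, |z i|)
          + (∑ i ∈ T1, |z i|) * (∑ i ∈ T2, |z i|) * (∑ i ∈ T3, |z i|)) := by
  classical
  set v : Fin 4 → Fin 3 → ℝ :=
    ![![lam, mu, 1], ![lam, mu', 1], ![lam', mu, 1], ![lam', mu', 1]] with hvdef
  set T : Fin 4 → Finset (Fin m) := ![T1, T2, T3, T4] with hTdef
  set F : Fin m → Fin m → Fin m → ℝ := fun i j k =>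
    |Matrix.det !![a i 0, a j 0, a k 0; a i 1, a j 1, a k 1; a i 2, a j 2, a k 2]| with hFdef
  -- symmetry
  have hs2 : ∀ i j k, F j i k = F i j k := by
    intro i j k
    simp only [hFdef]
    rw [show Matrix.det !![a j 0, a i 0, a k 0; a j 1, a i 1, a k 1; a j 2, a i 2, a k 2]
        = -Matrix.det !![a i 0, a j 0, a k 0; a i 1, a j 1, a k 1; a i 2, a j 2, a k 2] by
      simp [Matrix.det_fin_three]; ring]
    rw [abs_neg]
  have hs1 : ∀ i j k, F i k j = F i j k := by
    intro i j k
    simp only [hFdef]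
    rw [show Matrix.det !![a i 0, a k 0, a j 0; a i 1, a k 1, a j 1; a i 2, a k 2, a j 2]
        = -Matrix.det !![a i 0, a j 0, a k 0; a i 1, a j 1, a k 1; a i 2, a j 2, a k 2] by
      simp [Matrix.det_fin_three]; ring]
    rw [abs_neg]
  have hdiag : ∀ i j k : Fin m, (i = j ∨ j = k ∨ i = k) → F i j k = 0 := by
    intro i j k h
    simp only [hFdef]
    rw [abs_eq_zero]
    rcases h with h | h | h <;> subst h <;> (simp [Matrix.det_fin_three]; try ring)
  -- membership
  have haT : ∀ p : Fin 4, ∀ i ∈ T p, a i = z i • v p := by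
    intro p i hi
    fin_cases p <;>
      simp only [hTdef, hvdef, Matrix.cons_val', Matrix.cons_val_zero, Matrix.cons_val_one,
        Matrix.head_cons, Matrix.head_fin_const, Matrix.cons_val_fin_one, Matrix.empty_val',
        Fin.isValue, Matrix.cons_val_two, Matrix.tail_cons, Matrix.cons_val_three] at hi ⊢
    · exact ha1 i hi
    · exact ha2 i hi
    · exact ha3 i hi
    · exact ha4 i hi
  -- value of F on blocks
  have hF : ∀ p q r : Fin 4, ∀ i ∈ T p, ∀ j ∈ T q, ∀ k ∈ T r,
      F i j k = |z i| * |z j| * |z k| *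
        |Matrix.det !![v p 0, v q 0, v r 0; v p 1, v q 1, v r 1; v p 2, v q 2, v r 2]| := by
    intro p q r i hi j hj k hk
    simp only [hFdef]
    rw [haT p i hi, haT q j hj, haT r k hk]
    rw [show Matrix.det !![(z i • v p) 0, (z j • v q) 0, (z k • v r) 0;
          (z i • v p) 1, (z j • v q) 1, (z k • v r) 1;
          (z i • v p) 2, (z j • v q) 2, (z k • v r) 2]
        = z i * (z j * (z k *
            Matrix.det !![v p 0, v q 0, v r 0; v p 1, v q 1, v r 1; v p 2, v q 2, v r 2])) by
      simp [Matrix.det_fin_three, Pi.smul_apply, smul_eq_mul]; ring]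
    rw [abs_mul, abs_mul, abs_mul]
    ring
  -- det values
  have hE : ∀ p q r : Fin 4,
      |Matrix.det !![v p 0, v q 0, v r 0; v p 1, v q 1, v r 1; v p 2, v q 2, v r 2]|
        = if p = q ∨ p = r ∨ q = r then 0 else |lam - lam'| * |mu - mu'| := by
    intro p q r
    fin_cases p <;> fin_cases q <;> fin_cases r <;>
      simp only [hvdef, Matrix.det_fin_three, Matrix.cons_val', Matrix.cons_val_zero,
        Matrix.cons_val_one, Matrix.head_cons, Matrix.head_fin_const, Matrix.cons_val_fin_one,
        Matrix.empty_val', Fin.isValue, Matrix.cons_val_two, Matrix.tail_cons, Matrix.of_apply, Matrix.cons_val] <;>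
      norm_num <;>
      first
        | (rw [if_pos (by decide), abs_eq_zero]; ring1)
        | (rw [if_neg (by decide), ← abs_mul, abs_eq_abs]; first | (left; ring1) | (right; ring1))
        | (rw [if_neg (by decide), abs_eq_abs]; first | (left; ring1) | (right; ring1))
        | (rw [abs_eq_zero]; ring1)
        | (rw [← abs_mul, abs_eq_abs]; first | (left; ring1) | (right; ring1))
        | (rw [abs_eq_abs]; first | (left; ring1) | (right; ring1))
  -- partition of sums
  have hpart : ∀ g : Fin m → ℝ, (∑ i : Fin m, g i) = ∑ p : Fin 4, ∑ i ∈ T p, g i := by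
    intro g
    have d3 : Disjoint (T1 ∪ T2) T3 := by
      rw [Finset.disjoint_union_left]; exact ⟨h13, h23⟩
    have d4 : Disjoint (T1 ∪ T2 ∪ T3) T4 := by
      rw [Finset.disjoint_union_left, Finset.disjoint_union_left]
      exact ⟨⟨h14, h24⟩, h34⟩
    rw [Fin.sum_univ_four]
    simp only [hTdef, Matrix.cons_val_zero, Matrix.cons_val_one, Matrix.head_cons,
      Matrix.cons_val_two, Matrix.tail_cons, Matrix.cons_val_three]
    rw [← Finset.sum_union h12, ← Finset.sum_union d3, ← Finset.sum_union d4, hcover]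
  have hpart3 : ∀ f : Fin m → Fin m → Fin m → ℝ,
      (∑ i : Fin m, ∑ j : Fin m, ∑ k : Fin m, f i j k)
        = ∑ p : Fin 4, ∑ q : Fin 4, ∑ r : Fin 4,
            ∑ i ∈ T p, ∑ j ∈ T q, ∑ k ∈ T r, f i j k := by
    intro f
    calc (∑ i : Fin m, ∑ j : Fin m, ∑ k : Fin m, f i j k)
        = ∑ p : Fin 4, ∑ i ∈ T p, ∑ j : Fin m, ∑ k : Fin m, f i j k :=
          hpart fun i => ∑ j : Fin m, ∑ k : Fin m, f i j k
      _ = ∑ p : Fin 4, ∑ i ∈ T p, ∑ q : Fin 4, ∑ j ∈ T q, ∑ r : Fin 4, ∑ k ∈ T r, f i j k := by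
          refine Finset.sum_congr rfl fun p _ => Finset.sum_congr rfl fun i _ => ?_
          rw [hpart fun j => ∑ k : Fin m, f i j k]
          exact Finset.sum_congr rfl fun q _ => Finset.sum_congr rfl fun j _ =>
            hpart fun k => f i j k
      _ = ∑ p : Fin 4, ∑ q : Fin 4, ∑ r : Fin 4, ∑ i ∈ T p, ∑ j ∈ T q, ∑ k ∈ T r, f i j k := by
          refine Finset.sum_congr rfl fun p _ => ?_
          rw [Finset.sum_comm]
          refine Finset.sum_congr rfl fun q _ => ?_
          rw [show (∑ i ∈ T p, ∑ j ∈ T q, ∑ r : Fin 4, ∑ k ∈ T r, f i j k)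
              = ∑ i ∈ T p, ∑ r : Fin 4, ∑ j ∈ T q, ∑ k ∈ T r, f i j k from
            Finset.sum_congr rfl fun i _ => Finset.sum_comm]
          exact Finset.sum_comm
  -- factoring
  have flemma : ∀ (A B C : Finset (Fin m)) (c : ℝ),
      (∑ i ∈ A, ∑ j ∈ B, ∑ k ∈ C, |z i| * |z j| * |z k| * c)
        = (∑ i ∈ A, |z i|) * (∑ i ∈ B, |z i|) * (∑ i ∈ C, |z i|) * c := by
    intro A B C c
    calc (∑ i ∈ A, ∑ j ∈ B, ∑ k ∈ C, |z i| * |z j| * |z k| * c)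
        = ∑ i ∈ A, ∑ j ∈ B, |z i| * |z j| * (∑ k ∈ C, |z k|) * c := by
          refine Finset.sum_congr rfl fun i _ => Finset.sum_congr rfl fun j _ => ?_
          rw [← Finset.sum_mul, ← Finset.mul_sum]
      _ = ∑ i ∈ A, |z i| * (∑ j ∈ B, |z j|) * (∑ k ∈ C, |z k|) * c := by
          refine Finset.sum_congr rfl fun i _ => ?_
          rw [← Finset.sum_mul, ← Finset.sum_mul, ← Finset.mul_sum]
      _ = (∑ i ∈ A, |z i|) * (∑ i ∈ B, |z i|) * (∑ i ∈ C, |z i|) * c := by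
          rw [← Finset.sum_mul, ← Finset.sum_mul, ← Finset.sum_mul]
  -- total
  have htot : (∑ i : Fin m, ∑ j : Fin m, ∑ k : Fin m, F i j k)
      = ∑ p : Fin 4, ∑ q : Fin 4, ∑ r : Fin 4,
          ((∑ i ∈ T p, |z i|) * (∑ i ∈ T q, |z i|) * (∑ i ∈ T r, |z i|) *
            (if p = q ∨ p = r ∨ q = r then 0 else |lam - lam'| * |mu - mu'|)) := by
    rw [hpart3 F]
    refine Finset.sum_congr rfl fun p _ => Finset.sum_congr rfl fun q _ =>
      Finset.sum_congr rfl fun r _ => ?_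
    rw [show (∑ i ∈ T p, ∑ j ∈ T q, ∑ k ∈ T r, F i j k)
        = ∑ i ∈ T p, ∑ j ∈ T q, ∑ k ∈ T r,
            (|z i| * |z j| * |z k| *
              (if p = q ∨ p = r ∨ q = r then 0 else |lam - lam'| * |mu - mu'|)) from
      Finset.sum_congr rfl fun i hi => Finset.sum_congr rfl fun j hj =>
        Finset.sum_congr rfl fun k hk => by rw [hF p q r i hi j hj k hk, hE p q r]]
    exact flemma _ _ _ _
  -- evaluate the Fin 4 sums
  have hval : (∑ p : Fin 4, ∑ q : Fin 4, ∑ r : Fin 4,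
          ((∑ i ∈ T p, |z i|) * (∑ i ∈ T q, |z i|) * (∑ i ∈ T r, |z i|) *
            (if p = q ∨ p = r ∨ q = r then 0 else |lam - lam'| * |mu - mu'|)))
      = 6 * (|lam - lam'| * |mu - mu'| *
          ((∑ i ∈ T2, |z i|) * (∑ i ∈ T3, |z i|) * (∑ i ∈ T4, |z i|)
            + (∑ i ∈ T1, |z i|) * (∑ i ∈ T3, |z i|) * (∑ i ∈ T4, |z i|)
            + (∑ i ∈ T1, |z i|) * (∑ i ∈ T2, |z i|) * (∑ i ∈ T4, |z i|)
            + (∑ i ∈ T1, |z i|) * (∑ i ∈ T2, |z i|) * (∑ i ∈ T3, |z i|))) := by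
    simp only [Fin.sum_univ_four, hTdef, Matrix.cons_val_zero, Matrix.cons_val_one,
      Matrix.head_cons, Matrix.cons_val_two, Matrix.tail_cons, Matrix.cons_val_three]
    simp (config := { decide := true }) only [ite_true, ite_false]
    norm_num
    ring
  have hmain := sym6_aux F hs2 hs1 hdiag
  have hgoal : (∑ i : Fin m, ∑ j : Fin m, ∑ k : Fin m,
        if i < j ∧ j < k then
          |Matrix.det !![a i 0, a j 0, a k 0; a i 1, a j 1, a k 1; a i 2, a j 2, a k 2]|
        else 0)
      = ∑ i : Fin m, ∑ j : Fin m, ∑ k : Fin m, (if i < j ∧ j < k then F i j k else 0) := by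
    simp only [hFdef]
  rw [hgoal]
  have h6 : (6 : ℝ) * (∑ i : Fin m, ∑ j : Fin m, ∑ k : Fin m,
      (if i < j ∧ j < k then F i j k else 0)) = 6 * (|lam - lam'| * |mu - mu'| *
          ((∑ i ∈ T2, |z i|) * (∑ i ∈ T3, |z i|) * (∑ i ∈ T4, |z i|)
            + (∑ i ∈ T1, |z i|) * (∑ i ∈ T3, |z i|) * (∑ i ∈ T4, |z i|)
            + (∑ i ∈ T1, |z i|) * (∑ i ∈ T2, |z i|) * (∑ i ∈ T4, |z i|)
            + (∑ i ∈ T1, |z i|) * (∑ i ∈ T2, |z i|) * (∑ i ∈ T3, |z i|))) := by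
    rw [← hmain, htot, hval]
  have := mul_left_cancel₀ (by norm_num : (6:ℝ) ≠ 0) h6
  exact this
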